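/- For 0 < a < 1 and b > 0, the EDLiD PMF f(x;a,b) = (Λ(x+1;a,b) - Λ(x;a,b))/(1 - log a)^b is nonnegative for every nonnegative integer x and sums to 1 over x ∈ ℕ₀. -/

import Mathlib

open Filter Topology

/-- The function Λ(x;a,b) = (1 - a^x + ((1+x)a^x - 1) log a)^b. -/
noncomputable def Lam (a b : ℝ) (x : ℕ) : ℝ :=
  (1 - a ^ x + ((1 + (x : ℝ)) * a ^ x - 1) * Real.log a) ^ b

/-- PMF of the exponentiated discrete Lindley distribution (EDLiD). -/
noncomputable def f (a b : ℝ) (x : ℕ) : ℝ :=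
  (Lam a b (x + 1) - Lam a b x) / (1 - Real.log a) ^ b

noncomputable def gE (a : ℝ) (x : ℕ) : ℝ :=
  1 - a ^ x + ((1 + (x : ℝ)) * a ^ x - 1) * Real.log a

lemma gE_mono (a : ℝ) (ha0 : 0 < a) (ha1 : a < 1) (x : ℕ) : gE a x ≤ gE a (x + 1) := by
  have hL : Real.log a < 0 := Real.log_neg ha0 ha1
  have hkey : 1 - a + a * Real.log a ≥ 0 := by
    have h3 := Real.log_le_sub_one_of_pos (inv_pos.mpr ha0)
    rw [Real.log_inv] at h3
    have h4 := mul_le_mul_of_nonneg_left h3 ha0.le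
    have h5 : a * (a⁻¹ - 1) = 1 - a := by field_simp
    nlinarith
  have hp : 0 < a ^ x := pow_pos ha0 x
  have hx0 : (0:ℝ) ≤ (x:ℝ) := Nat.cast_nonneg x
  have key2 : 0 ≤ a ^ x * ((1 - a + a * Real.log a) +
      ((x : ℝ) + 1) * (1 - a) * (-Real.log a)) := by
    apply mul_nonneg hp.le
    apply add_nonneg hkey
    apply mul_nonneg (mul_nonneg (by linarith) (by linarith)) (by linarith)
  simp only [gE, pow_succ, Nat.cast_add, Nat.cast_one]
  nlinarith [key2]

lemma gE_zero (a : ℝ) : gE a 0 = 0 := by simp [gE]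

lemma gE_nonneg (a : ℝ) (ha0 : 0 < a) (ha1 : a < 1) (x : ℕ) : 0 ≤ gE a x := by
  induction x with
  | zero => simp [gE]
  | succ n ih => exact ih.trans (gE_mono a ha0 ha1 n)

theorem stmt6 (a b : ℝ) (ha0 : 0 < a) (ha1 : a < 1) (hb : 0 < b) :
    (∀ x : ℕ, 0 ≤ f a b x) ∧ HasSum (fun x : ℕ => f a b x) 1 := by
  have hL : Real.log a < 0 := Real.log_neg ha0 ha1
  have hD0 : (0:ℝ) < 1 - Real.log a := by linarith
  have hD : (0:ℝ) < (1 - Real.log a) ^ b := Real.rpow_pos_of_pos hD0 b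
  have hLam : ∀ x, Lam a b x = gE a x ^ b := fun x => rfl
  have hmono : ∀ x : ℕ, Lam a b x ≤ Lam a b (x + 1) := fun x => by
    rw [hLam, hLam]
    exact Real.rpow_le_rpow (gE_nonneg a ha0 ha1 x) (gE_mono a ha0 ha1 x) hb.le
  have hf : ∀ x : ℕ, 0 ≤ f a b x := fun x =>
    div_nonneg (sub_nonneg.mpr (hmono x)) hD.le
  refine ⟨hf, ?_⟩
  -- limit of gE
  have h1 : Tendsto (fun n : ℕ => a ^ n) atTop (𝓝 0) :=
    tendsto_pow_atTop_nhds_zero_of_lt_one ha0.le ha1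
  have h2 : Tendsto (fun n : ℕ => (n : ℝ) * a ^ n) atTop (𝓝 0) :=
    tendsto_self_mul_const_pow_of_lt_one ha0.le ha1
  have hg : Tendsto (fun n : ℕ => gE a n) atTop (𝓝 (1 - Real.log a)) := by
    have : Tendsto (fun n : ℕ => 1 - a ^ n + ((1 + (n : ℝ)) * a ^ n - 1) * Real.log a)
        atTop (𝓝 (1 - 0 + ((0 + 0) - 1) * Real.log a)) := by
      apply Tendsto.add (tendsto_const_nhds.sub h1)
      apply Tendsto.mul_const
      apply Tendsto.sub_const
      have : Tendsto (fun n : ℕ => a ^ n + (n : ℝ) * a ^ n) atTop (𝓝 (0 + 0)) := h1.add h2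
      simpa [add_mul, one_mul] using this
    simpa [gE, ← sub_eq_add_neg] using this
  have hgL : Tendsto (fun n : ℕ => Lam a b n) atTop (𝓝 ((1 - Real.log a) ^ b)) := by
    simp only [hLam]
    exact hg.rpow_const (Or.inl hD0.ne')
  rw [hasSum_iff_tendsto_nat_of_nonneg hf]
  have hsum : ∀ n : ℕ, ∑ i ∈ Finset.range n, f a b i = Lam a b n / (1 - Real.log a) ^ b := by
    intro n
    simp only [f, sub_div]
    rw [Finset.sum_range_sub (fun k => Lam a b k / (1 - Real.log a) ^ b)]
    have : Lam a b 0 = 0 := by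
      rw [hLam, gE_zero, Real.zero_rpow hb.ne']
    rw [this]
    ring
  have : Tendsto (fun n : ℕ => Lam a b n / (1 - Real.log a) ^ b) atTop
      (𝓝 ((1 - Real.log a) ^ b / (1 - Real.log a) ^ b)) := hgL.div_const _
  rw [div_self hD.ne'] at this
  exact this.congr fun n => (hsum n).symm
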